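/- Let E be a Dedekind complete Riesz space. If a sequence (f_n) in E order converges to f, then the Cesàro averages (1/n)·∑_{k=0}^{n-1} f_k order converge to f as n → ∞. -/

import Mathlib

open Finset

set_option linter.unusedSectionVars false

section AuxLemmas

variable {E : Type*} [ConditionallyCompleteLattice E] [AddCommGroup E] [Module ℝ E]
  [CovariantClass E E (· + ·) (· ≤ ·)]

lemma aux_inf_add_le {a b c : E} (ha : 0 ≤ a) (hb : 0 ≤ b) (hc : 0 ≤ c) :
    a ⊓ (b + c) ≤ (a ⊓ b) + (a ⊓ c) := by
  have h : (a ⊓ b) + (a ⊓ c) = ((a + (a ⊓ c)) ⊓ (b + (a ⊓ c))) := by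
    rw [inf_add]
  rw [h, add_inf, add_inf]
  refine le_inf (le_inf ?_ ?_) (le_inf ?_ ?_)
  · exact inf_le_left.trans (le_add_of_nonneg_right ha)
  · exact inf_le_left.trans (le_add_of_nonneg_right hc)
  · exact inf_le_left.trans (le_add_of_nonneg_left hb)
  · exact inf_le_right

lemma aux_disjoint_nsmul {a b : E} (ha : 0 ≤ a) (hb : 0 ≤ b) (h : a ⊓ b = 0) (n : ℕ) :
    (n • a) ⊓ b = 0 := by
  induction n with
  | zero => simpa using inf_eq_left.mpr hb
  | succ k ih =>
    refine le_antisymm ?_ (le_inf (nsmul_nonneg ha _) hb)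
    have h1 : b ⊓ (k • a + a) ≤ (b ⊓ k • a) + (b ⊓ a) :=
      aux_inf_add_le hb (nsmul_nonneg ha k) ha
    rw [inf_comm b (k • a), inf_comm b a, ih, h, add_zero] at h1
    calc (k + 1) • a ⊓ b ≤ b ⊓ (k • a + a) := by
          rw [succ_nsmul, inf_comm]
      _ ≤ 0 := h1

lemma aux_semiclosed {a : E} {n : ℕ} (hn : 0 < n) (h : 0 ≤ n • a) : 0 ≤ a := by
  have hd := posPart_inf_negPart_eq_zero a
  have hsub := posPart_sub_negPart a
  have hsmulsub : n • a = n • a⁺ - n • a⁻ := by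
    rw [← Nat.cast_smul_eq_nsmul ℝ n a, ← Nat.cast_smul_eq_nsmul ℝ n (a⁺),
      ← Nat.cast_smul_eq_nsmul ℝ n (a⁻), ← smul_sub, hsub]
  have h1 : n • a⁻ ≤ n • a⁺ := by
    rw [hsmulsub, sub_nonneg] at h; exact h
  have h2 : a⁻ ≤ n • a⁺ := by
    calc a⁻ = 1 • a⁻ := (one_nsmul _).symm
      _ ≤ n • a⁻ := nsmul_le_nsmul_left (negPart_nonneg a) hn
      _ ≤ n • a⁺ := h1
  have h3 : (n • a⁺) ⊓ a⁻ = 0 := aux_disjoint_nsmul (posPart_nonneg a) (negPart_nonneg a) hd n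
  have h4 : a⁻ = 0 := le_antisymm (by rw [← h3]; exact le_inf h2 le_rfl) (negPart_nonneg a)
  rw [← hsub, h4, sub_zero]
  exact posPart_nonneg a

lemma aux_inv_nsmul_nonneg_iff {a : E} {n : ℕ} (hn : 0 < n) :
    0 ≤ (n : ℝ)⁻¹ • a ↔ 0 ≤ a := by
  have hn' : (n : ℝ) ≠ 0 := Nat.cast_ne_zero.2 hn.ne'
  constructor
  · intro h
    have h2 := nsmul_nonneg h n
    rwa [← Nat.cast_smul_eq_nsmul ℝ, smul_smul, mul_inv_cancel₀ hn', one_smul] at h2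
  · intro h
    apply aux_semiclosed hn
    rw [← Nat.cast_smul_eq_nsmul ℝ, smul_smul, mul_inv_cancel₀ hn', one_smul]
    exact h

lemma aux_inv_smul_mono {a b : E} {n : ℕ} (hn : 0 < n) (h : a ≤ b) :
    (n : ℝ)⁻¹ • a ≤ (n : ℝ)⁻¹ • b := by
  rw [← sub_nonneg] at h ⊢
  rw [← smul_sub]
  exact (aux_inv_nsmul_nonneg_iff hn).2 h

lemma aux_rat_smul_nonneg (p q : ℕ) {c : E} (hc : 0 ≤ c) : 0 ≤ ((p : ℝ) / (q : ℝ)) • c := by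
  rcases Nat.eq_zero_or_pos q with h | h
  · simp [h]
  · have heq : ((p : ℝ) / (q : ℝ)) • c = p • ((q : ℝ)⁻¹ • c) := by
      rw [← Nat.cast_smul_eq_nsmul ℝ, smul_smul, div_eq_mul_inv]
    rw [heq]
    exact nsmul_nonneg ((aux_inv_nsmul_nonneg_iff h).2 hc) p

lemma aux_inv_smul_le_inv_smul {c : E} (hc : 0 ≤ c) {i k : ℕ} (hi : 0 < i) (hik : i ≤ k) :
    (k : ℝ)⁻¹ • c ≤ (i : ℝ)⁻¹ • c := by
  rw [← sub_nonneg, ← sub_smul]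
  have hk : 0 < k := lt_of_lt_of_le hi hik
  have : (i : ℝ)⁻¹ - (k : ℝ)⁻¹ = ((k - i : ℕ) : ℝ) / ((i * k : ℕ) : ℝ) := by
    have hi' : (i : ℝ) ≠ 0 := Nat.cast_ne_zero.2 hi.ne'
    have hk' : (k : ℝ) ≠ 0 := Nat.cast_ne_zero.2 hk.ne'
    rw [Nat.cast_sub hik, Nat.cast_mul]
    field_simp
  rw [this]
  exact aux_rat_smul_nonneg _ _ hc

lemma aux_arch {c d : E} (h : ∀ j : ℕ, (j + 1) • d ≤ c) : d ≤ 0 := by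
  set s := sSup (Set.range fun j : ℕ => (j + 1) • d) with hs
  have hne : (Set.range fun j : ℕ => (j + 1) • d).Nonempty := ⟨1 • d, ⟨0, rfl⟩⟩
  have hbdd : BddAbove (Set.range fun j : ℕ => (j + 1) • d) := by
    refine ⟨c, ?_⟩
    rintro _ ⟨j, rfl⟩
    exact h j
  have hlub : IsLUB (Set.range fun j : ℕ => (j + 1) • d) s := isLUB_csSup hne hbdd
  have hub : s ≤ s - d := by
    apply hlub.2
    rintro _ ⟨j, rfl⟩
    have h2 : (j + 1) • d + d ≤ s := by
      have h3 : (j + 2) • d ≤ s := hlub.1 ⟨j + 1, rfl⟩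
      rwa [succ_nsmul] at h3
    exact le_sub_iff_add_le.2 h2
  have h4 : s + d ≤ s := le_sub_iff_add_le.1 hub
  have h5 : d + s ≤ 0 + s := by rwa [add_comm d s, zero_add]
  exact le_of_add_le_add_right h5

lemma aux_sum_le_sum {ι : Type*} (s : Finset ι) (g h : ι → E) (H : ∀ i ∈ s, g i ≤ h i) :
    ∑ i ∈ s, g i ≤ ∑ i ∈ s, h i := by
  classical
  induction s using Finset.induction with
  | empty => simp
  | insert _ _ hni ih =>
    rename_i a t
    rw [Finset.sum_insert hni, Finset.sum_insert hni]
    exact add_le_add (H a (Finset.mem_insert_self a t))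
      (ih fun i hi => H i (Finset.mem_insert_of_mem hi))

lemma aux_sum_nonneg {ι : Type*} (s : Finset ι) (g : ι → E) (H : ∀ i ∈ s, 0 ≤ g i) :
    0 ≤ ∑ i ∈ s, g i := by
  have := aux_sum_le_sum s (fun _ => (0 : E)) g H
  simpa using this

end AuxLemmas

section Defs

variable {E : Type*} [ConditionallyCompleteLattice E] [AddCommGroup E] [Module ℝ E]
  [CovariantClass E E (· + ·) (· ≤ ·)]

/-- Order convergence of a sequence: there is a sequence `u ↓ 0` dominating the tails. -/
def OrderConvergesTo (f : ℕ → E) (x : E) : Prop :=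
  ∃ u : ℕ → E, Antitone u ∧ IsGLB (Set.range u) (0 : E) ∧
    ∀ m : ℕ, ∃ N : ℕ, ∀ n ≥ N, |f n - x| ≤ u m

/-- `p` is a component of `e`. -/
def IsComponent (e p : E) : Prop := 0 ≤ p ∧ p ≤ e ∧ p ⊓ (e - p) = 0

/-- A sequence of components is of density zero if its Cesàro means order converge to `0`. -/
def DensityZero (p : ℕ → E) : Prop :=
  OrderConvergesTo (fun n => (n : ℝ)⁻¹ • ∑ k ∈ Finset.range n, p k) (0 : E)

/-- The band projection (onto the band generated by `p`) applied to a positive element `f`. -/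
noncomputable def bandProj (p f : E) : E :=
  sSup (Set.range fun n : ℕ => f ⊓ (n : ℝ) • p)

end Defs

section Systems

variable (E : Type*) [ConditionallyCompleteLattice E] [AddCommGroup E] [Module ℝ E]
  [CovariantClass E E (· + ·) (· ≤ ·)]

/-- The data of a conditional expectation preserving system, without the
intertwining identity `T S = T`: a Dedekind complete Riesz space with weak order unit `e`,
the `f`-algebra multiplication of `E_e` (with unit `e`), a strictly-positive-free
conditional expectation operator `T` with `T e = e`, and a Riesz homomorphism `S`
with `S e = e`. -/
structure PreCEPS where
  e : E
  e_pos : 0 < e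
  weakUnit : ∀ x : E, e ⊓ |x| = 0 → x = 0
  /-- the `f`-algebra multiplication (of the ideal generated by `e`) -/
  mul : E →ₗ[ℝ] E →ₗ[ℝ] E
  mul_comm' : ∀ x y, mul x y = mul y x
  mul_pos' : ∀ x y, 0 ≤ x → 0 ≤ y → 0 ≤ mul x y
  one_mul' : ∀ x, mul e x = x
  finf' : ∀ x y z, x ⊓ y = 0 → 0 ≤ z → (mul x z) ⊓ y = 0
  /-- the conditional expectation operator -/
  T : E →ₗ[ℝ] E
  T_pos : ∀ x, 0 ≤ x → 0 ≤ T x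
  T_proj : ∀ x, T (T x) = T x
  T_e : T e = e
  T_oc : ∀ (s : Set E) (x : E), s.Nonempty → DirectedOn (· ≤ ·) s → IsLUB s x →
    IsLUB (T '' s) (T x)
  T_range_closed : ∀ (s : Set E) (x : E), (∀ y ∈ s, T y = y) → IsLUB s x → T x = x
  /-- the Riesz homomorphism -/
  S : E →ₗ[ℝ] E
  S_sup : ∀ x y, S (x ⊔ y) = S x ⊔ S y
  S_e : S e = e

/-- A conditional expectation preserving system. -/
structure CEPS extends PreCEPS E where
  TS : ∀ x, T (S x) = T x

variable {E}

/-- Strict positivity of the conditional expectation operator of a system. -/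
def CEPS.StrictPos (A : CEPS E) : Prop := ∀ x : E, 0 ≤ x → A.T x = 0 → x = 0

/-- Ergodicity, characterised by Cesàro convergence of
`T((S^k p)·q)` to `Tp·Tq` for all components `p, q` of `e`. -/
def CEPS.Ergodic (A : CEPS E) : Prop :=
  ∀ p q : E, IsComponent A.e p → IsComponent A.e q →
    OrderConvergesTo
      (fun n => (n : ℝ)⁻¹ • ∑ k ∈ Finset.range n, A.T (A.mul ((A.S ^ k) p) q))
      (A.mul (A.T p) (A.T q))

/-- Conditional weak mixing. -/
def CEPS.WeakMixing (A : CEPS E) : Prop :=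
  ∀ p q : E, IsComponent A.e p → IsComponent A.e q →
    OrderConvergesTo
      (fun n => (n : ℝ)⁻¹ • ∑ k ∈ Finset.range n,
        |A.T (A.mul ((A.S ^ k) p) q) - A.mul (A.T p) (A.T q)|) (0 : E)

end Systems

section Tensor

variable {E F G : Type*}
  [ConditionallyCompleteLattice E] [AddCommGroup E] [Module ℝ E]
  [CovariantClass E E (· + ·) (· ≤ ·)]
  [ConditionallyCompleteLattice F] [AddCommGroup F] [Module ℝ F]
  [CovariantClass F F (· + ·) (· ≤ ·)]
  [ConditionallyCompleteLattice G] [AddCommGroup G] [Module ℝ G]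
  [CovariantClass G G (· + ·) (· ≤ ·)]

/-- A realisation of the Dedekind completion of the Fremlin tensor product of the
underlying spaces of two conditional expectation preserving systems, carrying the
pre-system structure (Grobler's tensor product conditional expectation and the tensor
product Riesz homomorphism), but without the intertwining identity for the product. -/
structure TensorPreCEPS (A : CEPS E) (B : CEPS F) (G : Type*)
    [ConditionallyCompleteLattice G] [AddCommGroup G] [Module ℝ G]
    [CovariantClass G G (· + ·) (· ≤ ·)] where
  sys : PreCEPS G
  tmul : E →ₗ[ℝ] F →ₗ[ℝ] G
  tmul_pos : ∀ x y, 0 ≤ x → 0 ≤ y → 0 ≤ tmul x y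
  e_def : sys.e = tmul A.e B.e
  T_tmul : ∀ x y, sys.T (tmul x y) = tmul (A.T x) (B.T y)
  S_tmul : ∀ x y, sys.S (tmul x y) = tmul (A.S x) (B.S y)
  mul_tmul : ∀ x y x' y',
    sys.mul (tmul x y) (tmul x' y') = tmul (A.mul x x') (B.mul y y')
  comp_dense : ∀ u : G, IsComponent sys.e u →
    IsLUB {w : G | ∃ p q, IsComponent A.e p ∧ IsComponent B.e q ∧
      tmul p q ≤ u ∧ w = tmul p q} u
  tmul_oc_left : ∀ (x : ℕ → E) (a : E) (y : F), 0 ≤ y →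
    OrderConvergesTo x a → OrderConvergesTo (fun n => tmul (x n) y) (tmul a y)
  tmul_oc_right : ∀ (x : E) (y : ℕ → F) (b : F), 0 ≤ x →
    OrderConvergesTo y b → OrderConvergesTo (fun n => tmul x (y n)) (tmul x b)

/-- As `TensorPreCEPS`, but where the tensor product system is a full conditional
expectation preserving system. -/
structure TensorCEPS (A : CEPS E) (B : CEPS F) (G : Type*)
    [ConditionallyCompleteLattice G] [AddCommGroup G] [Module ℝ G]
    [CovariantClass G G (· + ·) (· ≤ ·)] where
  sys : CEPS G
  tmul : E →ₗ[ℝ] F →ₗ[ℝ] G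
  tmul_pos : ∀ x y, 0 ≤ x → 0 ≤ y → 0 ≤ tmul x y
  e_def : sys.e = tmul A.e B.e
  T_tmul : ∀ x y, sys.T (tmul x y) = tmul (A.T x) (B.T y)
  S_tmul : ∀ x y, sys.S (tmul x y) = tmul (A.S x) (B.S y)
  mul_tmul : ∀ x y x' y',
    sys.mul (tmul x y) (tmul x' y') = tmul (A.mul x x') (B.mul y y')
  comp_dense : ∀ u : G, IsComponent sys.e u →
    IsLUB {w : G | ∃ p q, IsComponent A.e p ∧ IsComponent B.e q ∧
      tmul p q ≤ u ∧ w = tmul p q} u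
  tmul_oc_left : ∀ (x : ℕ → E) (a : E) (y : F), 0 ≤ y →
    OrderConvergesTo x a → OrderConvergesTo (fun n => tmul (x n) y) (tmul a y)
  tmul_oc_right : ∀ (x : E) (y : ℕ → F) (b : F), 0 ≤ x →
    OrderConvergesTo y b → OrderConvergesTo (fun n => tmul x (y n)) (tmul x b)

end Tensor

/-- if `(f_n)` order converges to `f` in a Dedekind complete Riesz space,
then the Cesàro averages `(1/n)·∑_{k<n} f_k` order converge to `f`. -/
theorem cesaro_of_orderConvergesTo
    {E : Type*} [ConditionallyCompleteLattice E] [AddCommGroup E] [Module ℝ E]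
    [CovariantClass E E (· + ·) (· ≤ ·)]
    (f : ℕ → E) (x : E) (hf : OrderConvergesTo f x) :
    OrderConvergesTo (fun n => (n : ℝ)⁻¹ • ∑ k ∈ Finset.range n, f k) x := by
  unfold OrderConvergesTo at hf ⊢
  obtain ⟨u, hu_anti, hu_glb, hu⟩ := hf
  choose N hN using hu
  have hu_nonneg : ∀ m, 0 ≤ u m := fun m => hu_glb.1 ⟨m, rfl⟩
  set C : ℕ → E := fun m => ∑ k ∈ Finset.range (N m), |f k - x| with hCdef
  have hC_nonneg : ∀ m, 0 ≤ C m := by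
    intro m
    exact aux_sum_nonneg _ _ fun k _ => abs_nonneg _
  set v : ℕ → E := fun j =>
    (Finset.range (j + 1)).inf' (Finset.nonempty_range_iff.2 (Nat.succ_ne_zero j))
      (fun m => u m + ((j + 1 : ℕ) : ℝ)⁻¹ • C m) with hvdef
  have hterm_mono : ∀ {j j' : ℕ}, j ≤ j' → ∀ m : ℕ,
      u m + ((j' + 1 : ℕ) : ℝ)⁻¹ • C m ≤ u m + ((j + 1 : ℕ) : ℝ)⁻¹ • C m := by
    intro j j' h m
    exact add_le_add_right
      (aux_inv_smul_le_inv_smul (hC_nonneg m) (Nat.succ_pos _) (by omega)) _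
  refine ⟨v, ?_, ?_, ?_⟩
  · intro j j' hjj'
    apply Finset.le_inf'
    intro m hm
    have hm' : m ∈ Finset.range (j' + 1) :=
      Finset.mem_range.2 (lt_of_lt_of_le (Finset.mem_range.1 hm) (by omega))
    exact le_trans (Finset.inf'_le _ hm') (hterm_mono hjj' m)
  · constructor
    · rintro w ⟨j, rfl⟩
      apply Finset.le_inf'
      intro m _
      exact add_nonneg (hu_nonneg m)
        ((aux_inv_nsmul_nonneg_iff (Nat.succ_pos j)).2 (hC_nonneg m))
    · intro b hb
      apply hu_glb.2
      rintro w' ⟨m, rfl⟩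
      have key : ∀ j : ℕ, (j + 1) • (b - u m) ≤ C m := by
        intro j
        have h1 : b ≤ u m + ((j + 1 : ℕ) : ℝ)⁻¹ • C m := by
          have hj' := hb ⟨max m j, rfl⟩
          have h2 : v (max m j) ≤ u m + ((max m j + 1 : ℕ) : ℝ)⁻¹ • C m :=
            Finset.inf'_le _ (Finset.mem_range.2 (by omega))
          exact le_trans hj' (le_trans h2 (hterm_mono (le_max_right m j) m))
        have h3 : b - u m ≤ ((j + 1 : ℕ) : ℝ)⁻¹ • C m := sub_le_iff_le_add'.2 h1
        have h4 := nsmul_le_nsmul_right h3 (j + 1)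
        rwa [← Nat.cast_smul_eq_nsmul ℝ (j + 1) (((j + 1 : ℕ) : ℝ)⁻¹ • C m), smul_smul,
          mul_inv_cancel₀ (Nat.cast_ne_zero.2 (Nat.succ_ne_zero j)), one_smul] at h4
      exact sub_nonpos.1 (aux_arch key)
  · intro j
    refine ⟨max ((Finset.range (j + 1)).sup N) (j + 1), ?_⟩
    intro n hn
    show |(n : ℝ)⁻¹ • ∑ k ∈ Finset.range n, f k - x| ≤ v j
    have hnj : j + 1 ≤ n := le_trans (le_max_right _ _) hn
    have hnpos : 0 < n := lt_of_lt_of_le (Nat.succ_pos j) hnj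
    have hn' : (n : ℝ) ≠ 0 := Nat.cast_ne_zero.2 hnpos.ne'
    apply Finset.le_inf'
    intro m hm
    have hNm : N m ≤ n := le_trans (le_trans (Finset.le_sup hm) (le_max_left _ _)) hn
    have hA : (n : ℝ)⁻¹ • ∑ k ∈ Finset.range n, f k - x
        = (n : ℝ)⁻¹ • ∑ k ∈ Finset.range n, (f k - x) := by
      rw [Finset.sum_sub_distrib, smul_sub, Finset.sum_const, Finset.card_range,
        ← Nat.cast_smul_eq_nsmul ℝ n x, smul_smul, inv_mul_cancel₀ hn', one_smul]
    have hST : ∑ k ∈ Finset.range n, (f k - x) ≤ ∑ k ∈ Finset.range n, |f k - x| :=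
      aux_sum_le_sum _ _ _ fun k _ => le_abs_self _
    have hST' : -∑ k ∈ Finset.range n, (f k - x) ≤ ∑ k ∈ Finset.range n, |f k - x| := by
      rw [← Finset.sum_neg_distrib]
      exact aux_sum_le_sum _ _ _ fun k _ => neg_le_abs _
    have hB : |(n : ℝ)⁻¹ • ∑ k ∈ Finset.range n, (f k - x)|
        ≤ (n : ℝ)⁻¹ • ∑ k ∈ Finset.range n, |f k - x| := by
      refine abs_le'.2 ⟨aux_inv_smul_mono hnpos hST, ?_⟩
      rw [← smul_neg]
      exact aux_inv_smul_mono hnpos hST'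
    have hCbd : ∑ k ∈ Finset.range n, |f k - x| ≤ C m + n • u m := by
      have hsplit : ∑ k ∈ Finset.range n, |f k - x|
          = ∑ k ∈ Finset.range (N m), |f k - x| + ∑ k ∈ Finset.Ico (N m) n, |f k - x| := by
        rw [Finset.range_eq_Ico, Finset.range_eq_Ico]
        exact (Finset.sum_Ico_consecutive _ (Nat.zero_le _) hNm).symm
      rw [hsplit]
      refine add_le_add_right ?_ _
      calc ∑ k ∈ Finset.Ico (N m) n, |f k - x| ≤ ∑ _k ∈ Finset.Ico (N m) n, u m :=
            aux_sum_le_sum _ _ _ fun k hk => hN m k (Finset.mem_Ico.1 hk).1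
        _ = (n - N m) • u m := by rw [Finset.sum_const, Nat.card_Ico]
        _ ≤ n • u m := nsmul_le_nsmul_left (hu_nonneg m) (Nat.sub_le n _)
    rw [hA]
    calc |(n : ℝ)⁻¹ • ∑ k ∈ Finset.range n, (f k - x)|
        ≤ (n : ℝ)⁻¹ • ∑ k ∈ Finset.range n, |f k - x| := hB
      _ ≤ (n : ℝ)⁻¹ • (C m + n • u m) := aux_inv_smul_mono hnpos hCbd
      _ = (n : ℝ)⁻¹ • C m + u m := by
          rw [smul_add, ← Nat.cast_smul_eq_nsmul ℝ n (u m), smul_smul,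
            inv_mul_cancel₀ hn', one_smul]
      _ ≤ ((j + 1 : ℕ) : ℝ)⁻¹ • C m + u m :=
          add_le_add_left (aux_inv_smul_le_inv_smul (hC_nonneg m) (Nat.succ_pos j) hnj) _
      _ = u m + ((j + 1 : ℕ) : ℝ)⁻¹ • C m := add_comm _ _
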